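/- arXiv:1709.07553 — 4 statements merged into one kernel-verified Lean document; each statement's English description precedes it below -/
import Mathlib

section
/- Let X and Z be independent nonnegative real-valued random variables on a probability space, let C ≥ 0 and t ≥ 0, and suppose E[exp(tX)] and E[exp(tZ)] are finite. Then E[exp(t · max(0, X + Z − C))] ≤ (exp(tC) + exp(−tC) · E[exp(tX)]) · E[exp(tZ)]. -/
open MeasureTheory ProbabilityTheory

/-- For independent nonnegative real random variables `X`, `Z`, reals `C ≥ 0`, `t ≥ 0`,
with `E[exp(tX)]` and `E[exp(tZ)]` finite (integrable),
`E[exp(t · max(0, X + Z − C))] ≤ (exp(tC) + exp(−tC) · E[exp(tX)]) · E[exp(tZ)]`. -/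
theorem stash_mgf_step {Ω : Type*} [MeasureSpace Ω] [IsProbabilityMeasure (ℙ : Measure Ω)]
    (X Z : Ω → ℝ) (C t : ℝ) (hC : 0 ≤ C) (ht : 0 ≤ t)
    (hXm : Measurable X) (hZm : Measurable Z)
    (hXnn : ∀ ω, 0 ≤ X ω) (hZnn : ∀ ω, 0 ≤ Z ω)
    (hindep : IndepFun X Z ℙ)
    (hXint : Integrable (fun ω => Real.exp (t * X ω)) ℙ)
    (hZint : Integrable (fun ω => Real.exp (t * Z ω)) ℙ) :
    ∫ ω, Real.exp (t * max 0 (X ω + Z ω - C)) ∂ℙ ≤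
      (Real.exp (t * C) + Real.exp (-(t * C)) * ∫ ω, Real.exp (t * X ω) ∂ℙ) *
        ∫ ω, Real.exp (t * Z ω) ∂ℙ := by
  have hIe : IndepFun (fun ω => Real.exp (t * X ω)) (fun ω => Real.exp (t * Z ω)) ℙ :=
    hindep.comp (Real.measurable_exp.comp (measurable_const_mul t))
      (Real.measurable_exp.comp (measurable_const_mul t))
  have hmul : Integrable (fun ω => Real.exp (t * X ω) * Real.exp (t * Z ω)) ℙ :=
    hIe.integrable_mul hXint hZint
  have hintmul : ∫ ω, Real.exp (t * X ω) * Real.exp (t * Z ω) ∂ℙ =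
      (∫ ω, Real.exp (t * X ω) ∂ℙ) * ∫ ω, Real.exp (t * Z ω) ∂ℙ :=
    hIe.integral_fun_mul_eq_mul_integral hXint.1 hZint.1
  -- pointwise bound
  have hpt : ∀ ω, Real.exp (t * max 0 (X ω + Z ω - C)) ≤
      1 + Real.exp (-(t * C)) * (Real.exp (t * X ω) * Real.exp (t * Z ω)) := by
    intro ω
    have h1 : Real.exp (-(t * C)) * (Real.exp (t * X ω) * Real.exp (t * Z ω)) =
        Real.exp (t * (X ω + Z ω - C)) := by
      rw [← Real.exp_add, ← Real.exp_add]; ring_nf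
    rw [h1]
    rcases le_total (X ω + Z ω - C) 0 with h | h
    · have : t * max 0 (X ω + Z ω - C) = 0 := by
        rw [max_eq_left h, mul_zero]
      rw [this, Real.exp_zero]
      have := Real.exp_pos (t * (X ω + Z ω - C))
      linarith
    · have : t * max 0 (X ω + Z ω - C) = t * (X ω + Z ω - C) := by
        rw [max_eq_right h]
      rw [this]
      have := Real.exp_pos (t * (X ω + Z ω - C))
      linarith [le_refl (Real.exp (t * (X ω + Z ω - C)))]
  -- integrability of LHS
  have hRHSint : Integrable (fun ω => 1 + Real.exp (-(t * C)) *
      (Real.exp (t * X ω) * Real.exp (t * Z ω))) ℙ :=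
    (integrable_const 1).add (hmul.const_mul _)
  have hLm : Measurable fun ω => Real.exp (t * max 0 (X ω + Z ω - C)) :=
    (Real.measurable_exp.comp (measurable_const.max ((hXm.add hZm).sub measurable_const)
      |>.const_mul t))
  have hLint : Integrable (fun ω => Real.exp (t * max 0 (X ω + Z ω - C))) ℙ := by
    refine Integrable.mono' hRHSint hLm.aestronglyMeasurable ?_
    filter_upwards with ω
    rw [Real.norm_eq_abs, Real.abs_exp]
    exact hpt ω
  have step1 : ∫ ω, Real.exp (t * max 0 (X ω + Z ω - C)) ∂ℙ ≤
      ∫ ω, (1 + Real.exp (-(t * C)) * (Real.exp (t * X ω) * Real.exp (t * Z ω))) ∂ℙ :=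
    integral_mono hLint hRHSint hpt
  have step2 : ∫ ω, (1 + Real.exp (-(t * C)) * (Real.exp (t * X ω) * Real.exp (t * Z ω))) ∂ℙ =
      1 + Real.exp (-(t * C)) * ((∫ ω, Real.exp (t * X ω) ∂ℙ) * ∫ ω, Real.exp (t * Z ω) ∂ℙ) := by
    rw [integral_add (integrable_const 1) (hmul.const_mul _), integral_const, probReal_univ,
      one_smul, integral_const_mul, hintmul]
  -- 1 ≤ exp(tC) * ∫ exp(tZ)
  have hZ1 : (1 : ℝ) ≤ ∫ ω, Real.exp (t * Z ω) ∂ℙ := by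
    have : ∫ (_ : Ω), (1 : ℝ) ∂ℙ ≤ ∫ ω, Real.exp (t * Z ω) ∂ℙ := by
      refine integral_mono (integrable_const 1) hZint fun ω => ?_
      exact Real.one_le_exp (mul_nonneg ht (hZnn ω))
    simpa using this
  have hC1 : (1 : ℝ) ≤ Real.exp (t * C) := Real.one_le_exp (mul_nonneg ht hC)
  calc ∫ ω, Real.exp (t * max 0 (X ω + Z ω - C)) ∂ℙ
      ≤ 1 + Real.exp (-(t * C)) * ((∫ ω, Real.exp (t * X ω) ∂ℙ) * ∫ ω, Real.exp (t * Z ω) ∂ℙ) :=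
        step2 ▸ step1
    _ ≤ Real.exp (t * C) * (∫ ω, Real.exp (t * Z ω) ∂ℙ) +
        Real.exp (-(t * C)) * ((∫ ω, Real.exp (t * X ω) ∂ℙ) * ∫ ω, Real.exp (t * Z ω) ∂ℙ) := by
        have : (1 : ℝ) ≤ Real.exp (t * C) * ∫ ω, Real.exp (t * Z ω) ∂ℙ :=
          one_le_mul_of_one_le_of_one_le hC1 hZ1
        linarith
    _ = (Real.exp (t * C) + Real.exp (-(t * C)) * ∫ ω, Real.exp (t * X ω) ∂ℙ) *
        ∫ ω, Real.exp (t * Z ω) ∂ℙ := by ring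
end

section
/- Fix integers B ≥ 1, D ≥ 1 and reals C > 0, t > 0. Let Z_0, Z_1, Z_2, … be i.i.d. random variables, each binomially distributed with D trials and success probability 1/B, and define the reflected random walk X_0 = 0 and X_{i+1} = max(0, X_i + Z_i − C). If E[exp(t Z_0)] ≤ (1/2) · exp(tC), then for every i ≥ 0 one has E[exp(t X_i)] ≤ exp(2tC). -/
open MeasureTheory ProbabilityTheory

set_option linter.unusedSectionVars false

section helpers
variable {Ω : Type*} [MeasureSpace Ω] [IsProbabilityMeasure (ℙ : Measure Ω)]

lemma aux_ae_le (Y : Ω → ℕ) (D : ℕ)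
    (h0 : ∀ k, D < k → (ℙ {ω | Y ω = k}) = 0) :
    ∀ᵐ ω ∂(ℙ : Measure Ω), Y ω ≤ D := by
  rw [ae_iff]
  refine measure_mono_null (fun ω hω => ?_)
    (measure_iUnion_null (fun k : ℕ => h0 (D + 1 + k) (by omega)))
  simp only [Set.mem_setOf_eq, not_le] at hω
  exact Set.mem_iUnion.2 ⟨Y ω - (D + 1), by simp only [Set.mem_setOf_eq]; omega⟩

lemma aux_integral_exp (Y : Ω → ℕ) (hY : Measurable Y) (D : ℕ)
    (hle : ∀ᵐ ω ∂(ℙ : Measure Ω), Y ω ≤ D) (t : ℝ) :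
    ∫ ω, Real.exp (t * Y ω) ∂ℙ
      = ∑ k ∈ Finset.range (D + 1),
          Real.exp (t * k) * (ℙ {ω | Y ω = k}).toReal := by
  have hms : ∀ k : ℕ, MeasurableSet {ω | Y ω = k} := fun k =>
    hY (measurableSet_singleton k)
  have key : ∀ᵐ ω ∂(ℙ : Measure Ω), Real.exp (t * Y ω)
      = ∑ k ∈ Finset.range (D + 1),
          Set.indicator {ω | Y ω = k} (fun _ => Real.exp (t * k)) ω := by
    filter_upwards [hle] with ω hω
    rw [Finset.sum_eq_single (Y ω)]
    · rw [Set.indicator_of_mem (by simp : ω ∈ {ω' | Y ω' = Y ω})]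
    · intro k _ hk
      exact Set.indicator_of_notMem (fun h => hk (by simpa using h.symm)) _
    · intro h; exact absurd (Finset.mem_range.2 (by omega)) h
  rw [integral_congr_ae key, integral_finset_sum]
  · refine Finset.sum_congr rfl fun k _ => ?_
    rw [integral_indicator_const _ (hms k), smul_eq_mul, mul_comm, measureReal_def]
  · exact fun k _ => (integrable_const _).indicator (hms k)

end helpers

/-- Fix integers `B ≥ 1`, `D ≥ 1` and reals `C > 0`, `t > 0`. Let `Z 0, Z 1, …` be
i.i.d. `Bin(1/B, D)` random variables and let `X` be the reflected random walk
`X 0 = 0`, `X (i+1) = max(0, X i + Z i − C)`. If `E[exp(t · Z 0)] ≤ (1/2)·exp(tC)`,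
then `E[exp(t · X i)] ≤ exp(2tC)` for all `i`. -/
theorem reflected_walk_mgf_bound {Ω : Type*} [MeasureSpace Ω]
    [IsProbabilityMeasure (ℙ : Measure Ω)]
    (B D : ℕ) (hB : 1 ≤ B) (hD : 1 ≤ D) (C t : ℝ) (hC : 0 < C) (ht : 0 < t)
    (Z : ℕ → Ω → ℕ) (hZm : ∀ i, Measurable (Z i))
    (hindep : iIndepFun Z ℙ)
    (hbin : ∀ i, ∀ k : ℕ, (ℙ {ω : Ω | Z i ω = k}).toReal =
      (D.choose k : ℝ) * (1 / B) ^ k * (1 - 1 / B) ^ (D - k))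
    (X : ℕ → Ω → ℝ)
    (hX0 : ∀ ω, X 0 ω = 0)
    (hXrec : ∀ i ω, X (i + 1) ω = max 0 (X i ω + Z i ω - C))
    (hmgf : (∫ ω, Real.exp (t * Z 0 ω) ∂ℙ) ≤ (1 / 2) * Real.exp (t * C)) :
    ∀ i, (∫ ω, Real.exp (t * X i ω) ∂ℙ) ≤ Real.exp (2 * t * C) := by
  -- Z i ≤ D a.s.
  have hZae : ∀ i, ∀ᵐ ω ∂(ℙ : Measure Ω), Z i ω ≤ D := by
    intro i
    refine aux_ae_le (Z i) D (fun k hk => ?_)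
    have h := hbin i k
    rw [Nat.choose_eq_zero_of_lt hk] at h
    simp only [Nat.cast_zero, zero_mul] at h
    exact (ENNReal.toReal_eq_zero_iff _).mp h |>.resolve_right (measure_ne_top _ _)
  -- all Z i have the same mgf
  have hZint : ∀ i, ∫ ω, Real.exp (t * Z i ω) ∂ℙ = ∫ ω, Real.exp (t * Z 0 ω) ∂ℙ := by
    intro i
    rw [aux_integral_exp (Z i) (hZm i) D (hZae i) t,
        aux_integral_exp (Z 0) (hZm 0) D (hZae 0) t]
    exact Finset.sum_congr rfl fun k _ => by rw [hbin i k, hbin 0 k]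
  have hZmgf : ∀ i, (∫ ω, Real.exp (t * Z i ω) ∂ℙ) ≤ (1 / 2) * Real.exp (t * C) :=
    fun i => (hZint i).le.trans hmgf
  -- integrability of exp(t Z i)
  have hZem : ∀ i, Measurable fun ω => Real.exp (t * Z i ω) := fun i =>
    Real.measurable_exp.comp ((measurable_const_mul t).comp (measurable_from_nat.comp (hZm i)))
  have hIntZ : ∀ i, Integrable (fun ω => Real.exp (t * Z i ω)) ℙ := by
    intro i
    refine Integrable.mono' (integrable_const (Real.exp (t * D)))
      (hZem i).aestronglyMeasurable ?_
    filter_upwards [hZae i] with ω hω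
    rw [Real.norm_eq_abs, abs_of_pos (Real.exp_pos _)]
    exact Real.exp_le_exp.2 (mul_le_mul_of_nonneg_left (Nat.cast_le.2 hω) ht.le)
  -- exp(t C) ≥ 2
  have hone : (1 : ℝ) ≤ ∫ ω, Real.exp (t * Z 0 ω) ∂ℙ := by
    have := integral_mono (integrable_const 1) (hIntZ 0) (fun ω => by
      have : (0 : ℝ) ≤ t * Z 0 ω := mul_nonneg ht.le (Nat.cast_nonneg _)
      simpa using Real.one_le_exp this)
    simpa using this
  have h2exp : (2 : ℝ) ≤ Real.exp (t * C) := by linarith [hone.trans hmgf]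
  -- measurability and bounds for X
  have hXm : ∀ i, Measurable (X i) := by
    intro i
    induction i with
    | zero =>
      have : X 0 = fun _ => (0 : ℝ) := funext hX0
      rw [this]; exact measurable_const
    | succ i ih =>
      have : X (i + 1) = fun ω => max 0 (X i ω + Z i ω - C) := funext (hXrec i)
      rw [this]
      exact measurable_const.max ((ih.add (measurable_from_nat.comp (hZm i))).sub measurable_const)
  have hXnn : ∀ i ω, 0 ≤ X i ω := by
    intro i ω
    cases i with
    | zero => rw [hX0]
    | succ i => rw [hXrec]; exact le_max_left _ _
  have hXbd : ∀ i, ∀ᵐ ω ∂(ℙ : Measure Ω), X i ω ≤ i * D := by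
    intro i
    have hall : ∀ᵐ ω ∂(ℙ : Measure Ω), ∀ j, Z j ω ≤ D := ae_all_iff.2 hZae
    filter_upwards [hall] with ω hω
    induction i with
    | zero => rw [hX0]; simp
    | succ i ih =>
      rw [hXrec]
      have hz : (Z i ω : ℝ) ≤ D := Nat.cast_le.2 (hω i)
      have : X i ω + Z i ω - C ≤ (i + 1 : ℕ) * D := by
        push_cast; push_cast at ih; nlinarith
      exact max_le (by positivity) this
  have hXem : ∀ i, Measurable fun ω => Real.exp (t * X i ω) := fun i =>
    Real.measurable_exp.comp ((measurable_const_mul t).comp (hXm i))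
  have hIntX : ∀ i, Integrable (fun ω => Real.exp (t * X i ω)) ℙ := by
    intro i
    refine Integrable.mono' (integrable_const (Real.exp (t * (i * D))))
      (hXem i).aestronglyMeasurable ?_
    filter_upwards [hXbd i] with ω hω
    rw [Real.norm_eq_abs, abs_of_pos (Real.exp_pos _)]
    exact Real.exp_le_exp.2 (mul_le_mul_of_nonneg_left hω ht.le)
  -- X i is a function of Z 0, ..., Z (i-1)
  have hfact : ∀ i, ∃ g : (Fin i → ℕ) → ℝ, Measurable g ∧
      ∀ ω, X i ω = g (fun j => Z j ω) := by
    intro i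
    induction i with
    | zero => exact ⟨fun _ => 0, measurable_const, fun ω => hX0 ω⟩
    | succ i ih =>
      obtain ⟨g, hg, hgX⟩ := ih
      refine ⟨fun v => max 0 (g (fun j => v j.castSucc) + (v (Fin.last i) : ℝ) - C),
        ?_, ?_⟩
      · exact measurable_const.max
          (((hg.comp (measurable_pi_lambda _ fun j => measurable_pi_apply _)).add
            (measurable_from_nat.comp (measurable_pi_apply _))).sub measurable_const)
      · intro ω
        rw [hXrec i ω, hgX ω]
        congr 1
  -- independence of X i and Z i
  have hXZindep : ∀ i, IndepFun (X i) (Z i) ℙ := by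
    intro i
    obtain ⟨g, hg, hgX⟩ := hfact i
    have hd : Disjoint (Finset.range i) ({i} : Finset ℕ) := by simp
    have h := hindep.indepFun_finset (Finset.range i) {i} hd hZm
    let φ : ((k : (Finset.range i : Finset ℕ)) → ℕ) → ℝ :=
      fun v => g (fun j => v ⟨(j : ℕ), Finset.mem_range.2 j.isLt⟩)
    have hφ : Measurable φ :=
      hg.comp (measurable_pi_lambda _ fun j => measurable_pi_apply _)
    let ψ : ((k : ({i} : Finset ℕ)) → ℕ) → ℕ := fun v => v ⟨i, Finset.mem_singleton_self i⟩
    have hψ : Measurable ψ := measurable_pi_apply _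
    have h2 := h.comp hφ hψ
    have e1 : (φ ∘ fun a (k : (Finset.range i : Finset ℕ)) => Z k a) = X i :=
      funext fun ω => (hgX ω).symm
    have e2 : (ψ ∘ fun a (k : ({i} : Finset ℕ)) => Z k a) = Z i := rfl
    rwa [e1, e2] at h2
  -- main induction
  intro i
  induction i with
  | zero =>
    simp only [hX0, mul_zero, Real.exp_zero, integral_const, measure_univ,
      ENNReal.toReal_one, probReal_univ, smul_eq_mul, one_mul, mul_one]
    exact Real.one_le_exp (by positivity)
  | succ i ih =>
    set EX := ∫ ω, Real.exp (t * X i ω) ∂ℙ with hEX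
    set EZ := ∫ ω, Real.exp (t * Z i ω) ∂ℙ with hEZ
    have hEXnn : 0 ≤ EX := integral_nonneg fun ω => (Real.exp_pos _).le
    have hEZnn : 0 ≤ EZ := integral_nonneg fun ω => (Real.exp_pos _).le
    -- independence of exponentials
    have hφ : Measurable (fun x : ℝ => Real.exp (t * x)) :=
      Real.measurable_exp.comp (measurable_const_mul t)
    have hψ : Measurable (fun n : ℕ => Real.exp (t * (n : ℝ))) := measurable_from_nat
    have hindexp : IndepFun (fun ω => Real.exp (t * X i ω))
        (fun ω => Real.exp (t * Z i ω)) ℙ := by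
      have h := (hXZindep i).comp hφ hψ
      exact h
    have hIntXZ : Integrable (fun ω => Real.exp (t * X i ω) * Real.exp (t * Z i ω)) ℙ := by
      refine Integrable.mono' (integrable_const (Real.exp (t * (i * D)) * Real.exp (t * D)))
        ((hXem i).mul (hZem i)).aestronglyMeasurable ?_
      filter_upwards [hXbd i, hZae i] with ω h1 h2
      rw [Real.norm_eq_abs, abs_of_pos (by positivity)]
      exact mul_le_mul
        (Real.exp_le_exp.2 (mul_le_mul_of_nonneg_left h1 ht.le))
        (Real.exp_le_exp.2 (mul_le_mul_of_nonneg_left (Nat.cast_le.2 h2) ht.le))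
        (Real.exp_pos _).le (Real.exp_pos _).le
    have hprod : (∫ ω, Real.exp (t * X i ω) * Real.exp (t * Z i ω) ∂ℙ) = EX * EZ :=
      hindexp.integral_mul_eq_mul_integral (hIntX i).1 (hIntZ i).1
    -- pointwise bound
    have hpt : ∀ ω, Real.exp (t * X (i + 1) ω)
        ≤ 1 + Real.exp (-(t * C)) * (Real.exp (t * X i ω) * Real.exp (t * Z i ω)) := by
      intro ω
      have hrw : Real.exp (-(t * C)) * (Real.exp (t * X i ω) * Real.exp (t * Z i ω))
          = Real.exp (t * (X i ω + Z i ω - C)) := by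
        rw [← Real.exp_add, ← Real.exp_add]; ring_nf
      rw [hXrec i ω, hrw]
      rcases le_total (X i ω + Z i ω - C) 0 with h | h
      · rw [max_eq_left h]
        simp only [mul_zero, Real.exp_zero]
        linarith [Real.exp_pos (t * (X i ω + Z i ω - C))]
      · rw [max_eq_right h]
        linarith
    have hIntRHS : Integrable
        (fun ω => 1 + Real.exp (-(t * C)) * (Real.exp (t * X i ω) * Real.exp (t * Z i ω))) ℙ :=
      (integrable_const 1).add (hIntXZ.const_mul _)
    calc (∫ ω, Real.exp (t * X (i + 1) ω) ∂ℙ)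
        ≤ ∫ ω, 1 + Real.exp (-(t * C)) * (Real.exp (t * X i ω) * Real.exp (t * Z i ω)) ∂ℙ :=
          integral_mono (hIntX (i + 1)) hIntRHS hpt
      _ = 1 + Real.exp (-(t * C)) * (EX * EZ) := by
          rw [integral_add (integrable_const 1) (hIntXZ.const_mul _),
            integral_const_mul, hprod]
          simp
      _ ≤ 1 + Real.exp (-(t * C)) * (Real.exp (2 * t * C) * ((1 / 2) * Real.exp (t * C))) := by
          have h1 : EX * EZ ≤ Real.exp (2 * t * C) * ((1 / 2) * Real.exp (t * C)) :=
            mul_le_mul ih (hZmgf i) hEZnn (Real.exp_pos _).le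
          have h2 : (0 : ℝ) ≤ Real.exp (-(t * C)) := (Real.exp_pos _).le
          nlinarith
      _ = 1 + (1 / 2) * Real.exp (2 * t * C) := by
          have hmu : Real.exp (-(t * C)) * Real.exp (t * C) = 1 := by
            rw [← Real.exp_add]; simp
          linear_combination (1 / 2 * Real.exp (2 * t * C)) * hmu
      _ ≤ Real.exp (2 * t * C) := by
          have : (2 : ℝ) ≤ Real.exp (2 * t * C) := by
            calc (2 : ℝ) ≤ Real.exp (t * C) := h2exp
            _ ≤ Real.exp (2 * t * C) := Real.exp_le_exp.2 (by nlinarith)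
          linarith
end

section
/- Fix integers B ≥ 1, D ≥ 1 and reals C > 0, t > 0, α > 2C. Let Z_0, Z_1, Z_2, … be i.i.d. random variables, each binomially distributed with D trials and success probability 1/B, and define X_0 = 0 and X_{i+1} = max(0, X_i + Z_i − C). If E[exp(t Z_0)] ≤ (1/2) · exp(tC), then for every i ≥ 0, Pr[X_i > α] ≤ exp(t · (2C − α)). -/
set_option maxHeartbeats 1000000


open MeasureTheory ProbabilityTheory

noncomputable def walkF (C : ℝ) : ℕ → (ℕ → ℕ) → ℝ
  | 0, _ => 0
  | (i+1), z => max 0 (walkF C i z + z i - C)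

lemma walkF_measurable (C : ℝ) (i : ℕ) : Measurable (walkF C i) := by
  induction i with
  | zero => exact measurable_const
  | succ i ih =>
    exact measurable_const.max
      ((ih.add (measurable_from_nat.comp (measurable_pi_apply i))).sub measurable_const)

lemma walkF_congr (C : ℝ) : ∀ (i : ℕ) (z z' : ℕ → ℕ), (∀ j < i, z j = z' j) →
    walkF C i z = walkF C i z' := by
  intro i
  induction i with
  | zero => intro z z' _; rfl
  | succ i ih =>
    intro z z' h
    simp only [walkF, ih z z' (fun j hj => h j (Nat.lt_succ_of_lt hj)),
      h i (Nat.lt_succ_self i)]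

/-- Fix integers `B ≥ 1`, `D ≥ 1` and reals `C > 0`, `t > 0`, `α > 2C`. Let
`Z 0, Z 1, …` be i.i.d. `Bin(1/B, D)` random variables and let `X` be the reflected
random walk `X 0 = 0`, `X (i+1) = max(0, X i + Z i − C)`. If
`E[exp(t · Z 0)] ≤ (1/2)·exp(tC)`, then `Pr[X i > α] ≤ exp(t·(2C − α))` for all `i`. -/
theorem reflected_walk_tail_bound {Ω : Type*} [MeasureSpace Ω]
    [IsProbabilityMeasure (ℙ : Measure Ω)]
    (B D : ℕ) (hB : 1 ≤ B) (hD : 1 ≤ D) (C t α : ℝ) (hC : 0 < C) (ht : 0 < t)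
    (hα : 2 * C < α)
    (Z : ℕ → Ω → ℕ) (hZm : ∀ i, Measurable (Z i))
    (hindep : iIndepFun Z ℙ)
    (hbin : ∀ i, ∀ k : ℕ, (ℙ {ω : Ω | Z i ω = k}).toReal =
      (D.choose k : ℝ) * (1 / B) ^ k * (1 - 1 / B) ^ (D - k))
    (X : ℕ → Ω → ℝ) (hXm : ∀ i, Measurable (X i))
    (hX0 : ∀ ω, X 0 ω = 0)
    (hXrec : ∀ i ω, X (i + 1) ω = max 0 (X i ω + Z i ω - C))
    (hmgf : (∫ ω, Real.exp (t * Z 0 ω) ∂ℙ) ≤ (1 / 2) * Real.exp (t * C)) :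
    ∀ i, (ℙ {ω : Ω | X i ω > α}).toReal ≤ Real.exp (t * (2 * C - α)) := by
  -- each Z i is a.e. bounded by D
  have hZzero : ∀ i k, D < k → ℙ {ω : Ω | Z i ω = k} = 0 := by
    intro i k hk
    have h0 : (ℙ {ω : Ω | Z i ω = k}).toReal = 0 := by
      rw [hbin i k, Nat.choose_eq_zero_of_lt hk]; simp
    exact (ENNReal.toReal_eq_zero_iff _).mp h0 |>.resolve_right (measure_ne_top _ _)
  have hZD : ∀ i, ∀ᵐ ω ∂(ℙ : Measure Ω), Z i ω ≤ D := by
    intro i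
    have hsub : {ω : Ω | ¬ Z i ω ≤ D} ⊆ ⋃ k : ℕ, {ω : Ω | Z i ω = D + 1 + k} := by
      intro ω hω
      simp only [Set.mem_setOf_eq, not_le] at hω
      exact Set.mem_iUnion.mpr ⟨Z i ω - (D + 1), by
        simp only [Set.mem_setOf_eq]; omega⟩
    have : ℙ (⋃ k : ℕ, {ω : Ω | Z i ω = D + 1 + k}) = 0 :=
      measure_iUnion_null fun k => hZzero i (D + 1 + k) (by omega)
    exact measure_mono_null hsub this
  -- nonnegativity of X
  have hXnn : ∀ i ω, 0 ≤ X i ω := by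
    intro i ω
    cases i with
    | zero => exact (hX0 ω).ge
    | succ i => rw [hXrec i ω]; exact le_max_left _ _
  -- a.e. bound on X
  have hXbd : ∀ i, ∀ᵐ ω ∂(ℙ : Measure Ω), X i ω ≤ (i : ℝ) * D := by
    intro i
    induction i with
    | zero => filter_upwards with ω; simp [hX0 ω]
    | succ i ih =>
      filter_upwards [ih, hZD i] with ω h1 h2
      rw [hXrec i ω]
      have hD0 : (0:ℝ) ≤ D := by positivity
      have : (Z i ω : ℝ) ≤ D := by exact_mod_cast h2
      refine max_le (by positivity) ?_
      push_cast
      nlinarith [hXnn i ω]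
  -- measurability of exp functions
  have hmZ : ∀ i, Measurable fun ω => Real.exp (t * Z i ω) :=
    fun i => Real.measurable_exp.comp (measurable_const.mul
      (measurable_from_nat.comp (hZm i)))
  have hmX : ∀ i, Measurable fun ω => Real.exp (t * X i ω) :=
    fun i => Real.measurable_exp.comp (measurable_const.mul (hXm i))
  -- integrability
  have intZ : ∀ i, Integrable (fun ω => Real.exp (t * Z i ω)) ℙ := by
    intro i
    refine Integrable.mono' (integrable_const (Real.exp (t * D)))
      (hmZ i).aestronglyMeasurable ?_
    filter_upwards [hZD i] with ω h
    rw [Real.norm_eq_abs, abs_of_pos (Real.exp_pos _)]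
    exact Real.exp_le_exp.mpr (by
      have : (Z i ω : ℝ) ≤ D := by exact_mod_cast h
      nlinarith)
  have intX : ∀ i, Integrable (fun ω => Real.exp (t * X i ω)) ℙ := by
    intro i
    refine Integrable.mono' (integrable_const (Real.exp (t * ((i : ℝ) * D))))
      (hmX i).aestronglyMeasurable ?_
    filter_upwards [hXbd i] with ω h
    rw [Real.norm_eq_abs, abs_of_pos (Real.exp_pos _)]
    exact Real.exp_le_exp.mpr (by nlinarith)
  have intXZ : ∀ i, Integrable (fun ω => Real.exp (t * X i ω) * Real.exp (t * Z i ω)) ℙ := by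
    intro i
    refine Integrable.mono' (integrable_const (Real.exp (t * ((i : ℝ) * D)) * Real.exp (t * D)))
      ((hmX i).mul (hmZ i)).aestronglyMeasurable ?_
    filter_upwards [hXbd i, hZD i] with ω h1 h2
    rw [Real.norm_eq_abs, abs_of_pos (by positivity)]
    have hz : (Z i ω : ℝ) ≤ D := by exact_mod_cast h2
    exact mul_le_mul (Real.exp_le_exp.mpr (by nlinarith)) (Real.exp_le_exp.mpr (by nlinarith))
      (Real.exp_pos _).le (Real.exp_pos _).le
  -- identical distribution
  have hmap : ∀ i, Measure.map (Z i) ℙ = Measure.map (Z 0) ℙ := by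
    intro i
    refine Measure.ext_of_singleton fun k => ?_
    rw [Measure.map_apply (hZm i) (measurableSet_singleton k),
      Measure.map_apply (hZm 0) (measurableSet_singleton k)]
    have h1 : Z i ⁻¹' {k} = {ω : Ω | Z i ω = k} := rfl
    have h2 : Z 0 ⁻¹' {k} = {ω : Ω | Z 0 ω = k} := rfl
    rw [h1, h2]
    refine (ENNReal.toReal_eq_toReal_iff' (measure_ne_top _ _) (measure_ne_top _ _)).mp ?_
    rw [hbin i k, hbin 0 k]
  have hZeq : ∀ i, (∫ ω, Real.exp (t * Z i ω) ∂ℙ) = ∫ ω, Real.exp (t * Z 0 ω) ∂ℙ := by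
    intro i
    have hg : AEStronglyMeasurable (fun k : ℕ => Real.exp (t * k))
        (Measure.map (Z i) ℙ) := measurable_from_nat.aestronglyMeasurable
    have e1 : (∫ ω, Real.exp (t * Z i ω) ∂ℙ)
        = ∫ k, Real.exp (t * k) ∂(Measure.map (Z i) ℙ) :=
      (integral_map (hZm i).aemeasurable hg).symm
    have hg0 : AEStronglyMeasurable (fun k : ℕ => Real.exp (t * k))
        (Measure.map (Z 0) ℙ) := measurable_from_nat.aestronglyMeasurable
    have e2 : (∫ ω, Real.exp (t * Z 0 ω) ∂ℙ)
        = ∫ k, Real.exp (t * k) ∂(Measure.map (Z 0) ℙ) :=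
      (integral_map (hZm 0).aemeasurable hg0).symm
    rw [e1, e2, hmap i]
  -- E[exp(t Z 0)] ≥ 1
  have hZ1 : (1 : ℝ) ≤ ∫ ω, Real.exp (t * Z 0 ω) ∂ℙ := by
    have : (∫ _ω, (1:ℝ) ∂(ℙ : Measure Ω)) ≤ ∫ ω, Real.exp (t * Z 0 ω) ∂ℙ := by
      refine integral_mono (integrable_const 1) (intZ 0) fun ω => ?_
      have : (0:ℝ) ≤ t * Z 0 ω := by positivity
      simpa using Real.one_le_exp this
    simpa using this
  have hE2 : (2 : ℝ) ≤ Real.exp (t * C) := by nlinarith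
  -- X i is a measurable function of Z 0, ..., Z (i-1)
  have hXrep : ∀ i ω, X i ω = walkF C i (fun j => Z j ω) := by
    intro i
    induction i with
    | zero => intro ω; rw [hX0 ω]; rfl
    | succ i ih => intro ω; rw [hXrec i ω, ih ω]; rfl
  -- independence of exp(tX i) and exp(tZ i)
  have hindXZ : ∀ i, IndepFun (fun ω => Real.exp (t * X i ω))
      (fun ω => Real.exp (t * Z i ω)) ℙ := by
    intro i
    have hdisj : Disjoint (Finset.range i) ({i} : Finset ℕ) := by
      simp [Finset.disjoint_singleton_right]
    have base := hindep.indepFun_finset (Finset.range i) {i} hdisj hZm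
    set φ : (↥(Finset.range i) → ℕ) → ℝ :=
      fun v => Real.exp (t * walkF C i (fun j => if h : j ∈ Finset.range i then v ⟨j, h⟩ else 0))
      with hφ
    set ψ : (↥({i} : Finset ℕ) → ℕ) → ℝ :=
      fun v => Real.exp (t * v ⟨i, Finset.mem_singleton_self i⟩) with hψ
    have hφm : Measurable φ := by
      refine Real.measurable_exp.comp (measurable_const.mul
        ((walkF_measurable C i).comp (measurable_pi_lambda _ fun j => ?_)))
      by_cases h : j ∈ Finset.range i
      · simpa [h] using measurable_pi_apply (⟨j, h⟩ : ↥(Finset.range i))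
      · simp [h]
    have hψm : Measurable ψ :=
      Real.measurable_exp.comp (measurable_const.mul
        (measurable_from_nat.comp (measurable_pi_apply _)))
    have hcomp := base.comp hφm hψm
    have e1 : (φ ∘ fun ω (j : ↥(Finset.range i)) => Z j ω)
        = fun ω => Real.exp (t * X i ω) := by
      funext ω
      simp only [Function.comp_apply, hφ]
      congr 1
      rw [hXrep i ω]
      congr 1
      refine walkF_congr C i _ _ fun j hj => ?_
      simp [Finset.mem_range.mpr hj]
    have e2 : (ψ ∘ fun ω (j : ↥({i} : Finset ℕ)) => Z j ω)
        = fun ω => Real.exp (t * Z i ω) := by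
      funext ω; rfl
    rwa [e1, e2] at hcomp
  -- main induction: MGF bound
  have key : ∀ i, (∫ ω, Real.exp (t * X i ω) ∂ℙ) ≤ Real.exp (t * (2 * C)) := by
    intro i
    induction i with
    | zero =>
      have : (∫ ω, Real.exp (t * X 0 ω) ∂ℙ) = 1 := by
        simp [hX0]
      rw [this]
      exact Real.one_le_exp (by positivity)
    | succ i ih =>
      have hptw : ∀ ω, Real.exp (t * X (i+1) ω)
          ≤ 1 + Real.exp (t * X i ω) * Real.exp (t * Z i ω) * Real.exp (-(t * C)) := by
        intro ω
        rw [hXrec i ω]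
        have hmm : t * max 0 (X i ω + Z i ω - C)
            = max 0 (t * (X i ω + Z i ω - C)) := by
          rw [mul_max_of_nonneg _ _ ht.le, mul_zero]
        rw [hmm]
        rcases le_total (t * (X i ω + ↑(Z i ω) - C)) 0 with h | h
        · rw [max_eq_left h]
          simp only [Real.exp_zero]
          nlinarith [Real.exp_pos (t * X i ω), Real.exp_pos (t * (Z i ω : ℝ)),
            Real.exp_pos (-(t*C)), mul_pos (mul_pos (Real.exp_pos (t * X i ω))
              (Real.exp_pos (t * (Z i ω : ℝ)))) (Real.exp_pos (-(t*C)))]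
        · rw [max_eq_right h]
          have : Real.exp (t * (X i ω + ↑(Z i ω) - C))
              = Real.exp (t * X i ω) * Real.exp (t * Z i ω) * Real.exp (-(t * C)) := by
            rw [← Real.exp_add, ← Real.exp_add]; ring_nf
          rw [this]; linarith
      have hint_rhs : Integrable (fun ω => 1 + Real.exp (t * X i ω) * Real.exp (t * Z i ω)
          * Real.exp (-(t * C))) ℙ :=
        (integrable_const 1).add ((intXZ i).mul_const _)
      have step1 : (∫ ω, Real.exp (t * X (i+1) ω) ∂ℙ)
          ≤ ∫ ω, (1 + Real.exp (t * X i ω) * Real.exp (t * Z i ω) * Real.exp (-(t * C))) ∂ℙ :=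
        integral_mono (intX (i+1)) hint_rhs hptw
      have step2 : (∫ ω, (1 + Real.exp (t * X i ω) * Real.exp (t * Z i ω)
          * Real.exp (-(t * C))) ∂ℙ)
          = 1 + (∫ ω, Real.exp (t * X i ω) * Real.exp (t * Z i ω) ∂ℙ) * Real.exp (-(t * C)) := by
        rw [integral_add (integrable_const 1) ((intXZ i).mul_const _), integral_const,
          integral_mul_const]
        simp
      have step3 : (∫ ω, Real.exp (t * X i ω) * Real.exp (t * Z i ω) ∂ℙ)
          = (∫ ω, Real.exp (t * X i ω) ∂ℙ) * ∫ ω, Real.exp (t * Z i ω) ∂ℙ :=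
        (hindXZ i).integral_mul_eq_mul_integral (hmX i).aestronglyMeasurable (hmZ i).aestronglyMeasurable
      have hZi : (∫ ω, Real.exp (t * Z i ω) ∂ℙ) ≤ (1/2) * Real.exp (t * C) := by
        rw [hZeq i]; exact hmgf
      have hZi0 : (0:ℝ) ≤ ∫ ω, Real.exp (t * Z i ω) ∂ℙ :=
        integral_nonneg fun ω => (Real.exp_pos _).le
      have hXi0 : (0:ℝ) ≤ ∫ ω, Real.exp (t * X i ω) ∂ℙ :=
        integral_nonneg fun ω => (Real.exp_pos _).le
      rw [step2, step3] at step1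
      set E := Real.exp (t * C) with hE
      have hA : Real.exp (t * (2 * C)) = E * E := by
        rw [hE, ← Real.exp_add]; ring_nf
      have hinv : Real.exp (-(t * C)) * E = 1 := by
        rw [hE, ← Real.exp_add]; simp
      have hinv0 : (0:ℝ) < Real.exp (-(t * C)) := Real.exp_pos _
      rw [hA] at ih ⊢
      set a := ∫ ω, Real.exp (t * X i ω) ∂ℙ
      set b := ∫ ω, Real.exp (t * Z i ω) ∂ℙ
      have hab : a * b ≤ (E * E) * ((1/2) * E) :=
        mul_le_mul ih hZi hZi0 (by nlinarith)
      have h4 : Real.exp (-(t * C)) * (a * b) ≤ Real.exp (-(t * C)) * ((E * E) * ((1/2) * E)) :=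
        mul_le_mul_of_nonneg_left hab hinv0.le
      have h5 : Real.exp (-(t * C)) * ((E * E) * ((1/2) * E)) = (1/2) * (E * E) := by
        have : Real.exp (-(t * C)) * ((E * E) * ((1/2) * E))
            = (Real.exp (-(t * C)) * E) * ((1/2) * (E * E)) := by ring
        rw [this, hinv, one_mul]
      have h6 : 1 + a * b * Real.exp (-(t * C)) ≤ 1 + (1/2) * (E * E) := by
        nlinarith
      have h7 : 1 + (1/2) * (E * E) ≤ E * E := by nlinarith
      linarith
  -- Chernoff / Markov step
  intro i
  have hsub : {ω : Ω | X i ω > α} ⊆ {ω : Ω | Real.exp (t * α) ≤ Real.exp (t * X i ω)} := by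
    intro ω hω
    simp only [Set.mem_setOf_eq] at hω ⊢
    exact Real.exp_le_exp.mpr (by nlinarith)
  have hmarkov := mul_meas_ge_le_integral_of_nonneg
    (f := fun ω => Real.exp (t * X i ω))
    (Filter.Eventually.of_forall fun ω => (Real.exp_pos _).le) (intX i) (Real.exp (t * α))
  have hmono : (ℙ {ω : Ω | X i ω > α}).toReal
      ≤ (ℙ {ω : Ω | Real.exp (t * α) ≤ Real.exp (t * X i ω)}).toReal :=
    ENNReal.toReal_mono (measure_ne_top _ _) (measure_mono hsub)
  have h1 : Real.exp (t * α) * (ℙ {ω : Ω | X i ω > α}).toReal ≤ Real.exp (t * (2 * C)) := by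
    calc Real.exp (t * α) * (ℙ {ω : Ω | X i ω > α}).toReal
        ≤ Real.exp (t * α) * (ℙ {ω : Ω | Real.exp (t * α) ≤ Real.exp (t * X i ω)}).toReal :=
          mul_le_mul_of_nonneg_left hmono (Real.exp_pos _).le
      _ ≤ ∫ ω, Real.exp (t * X i ω) ∂ℙ := hmarkov
      _ ≤ Real.exp (t * (2 * C)) := key i
  have heq : Real.exp (t * (2 * C - α)) = Real.exp (t * (2 * C)) / Real.exp (t * α) := by
    rw [← Real.exp_sub]; ring_nf
  rw [heq, le_div_iff₀ (Real.exp_pos _)]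
  linarith
end

section
/- Fix integers B ≥ 1, D ≥ 1 and reals C > 0 and S, and set t = CB/D − 1. Assume t > 0, S/B > 2C, and exp(t) < 1 + (tC − ln 2)·B/D. On a common probability space, for each j ∈ {0, …, B−1} let (X_i^{(j)})_{0 ≤ i ≤ B} be a process with X_0^{(j)} = 0 and X_{i+1}^{(j)} = max(0, X_i^{(j)} + Z_i^{(j)} − C), where for each fixed j the increments Z_0^{(j)}, …, Z_{B−1}^{(j)} are i.i.d. binomial with D trials and success probability 1/B (the processes for different j may be arbitrarily correlated). Then Pr[ ∃ j < B, ∃ i ≤ B : X_i^{(j)} > S/B ] ≤ B² · exp((CB/D − 1) · (2C − S/B)). -/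
open MeasureTheory ProbabilityTheory

open Real

private lemma mgf_nat_pmf {Ω : Type*} [MeasureSpace Ω] [IsProbabilityMeasure (ℙ : Measure Ω)]
    (Z : Ω → ℕ) (hZ : Measurable Z) (D : ℕ) (p : ℝ) (t : ℝ)
    (hbin : ∀ k : ℕ, (ℙ {ω | Z ω = k}).toReal = (D.choose k : ℝ) * p ^ k * (1 - p) ^ (D - k)) :
    Integrable (fun ω => exp (t * (Z ω : ℝ))) ℙ ∧
      mgf (fun ω => (Z ω : ℝ)) ℙ t = (p * exp t + (1 - p)) ^ D := by
  classical
  have hmk : ∀ k : ℕ, MeasurableSet {ω | Z ω = k} := fun k =>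
    hZ (measurableSet_singleton k)
  have hnull : ∀ k, D < k → ℙ {ω | Z ω = k} = 0 := by
    intro k hk
    have h0 : (ℙ {ω | Z ω = k}).toReal = 0 := by
      rw [hbin k, Nat.choose_eq_zero_of_lt hk]; ring
    exact (ENNReal.toReal_eq_zero_iff _).1 h0 |>.resolve_right (measure_ne_top _ _)
  have hae : ∀ᵐ ω ∂(ℙ : Measure Ω), Z ω ≤ D := by
    have : ℙ {ω | ¬ Z ω ≤ D} = 0 := by
      refine measure_mono_null (fun ω hω => ?_) (measure_iUnion_null
        (s := fun k : ℕ => {ω | Z ω = D + 1 + k}) (fun k => hnull _ (by omega)))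
      simp only [Set.mem_setOf_eq, not_le] at hω
      exact Set.mem_iUnion.2 ⟨Z ω - (D + 1), by simp only [Set.mem_setOf_eq]; omega⟩
    exact this
  set f : Ω → ℝ := fun ω =>
    ∑ k ∈ Finset.range (D + 1), Set.indicator {ω | Z ω = k} (fun _ => exp (t * k)) ω with hf
  have heq : (fun ω => exp (t * (Z ω : ℝ))) =ᵐ[(ℙ : Measure Ω)] f := by
    filter_upwards [hae] with ω hω
    rw [hf]
    simp only [Set.indicator_apply, Set.mem_setOf_eq]
    rw [Finset.sum_congr rfl (fun k _ => by
      exact if_congr (Iff.intro Eq.symm Eq.symm) rfl rfl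
        : ∀ k ∈ Finset.range (D+1), (if Z ω = k then exp (t * k) else 0)
          = if k = Z ω then exp (t * k) else 0)]
    rw [Finset.sum_ite_eq' (Finset.range (D + 1)) (Z ω) (fun k => exp (t * k))]
    simp [Finset.mem_range, Nat.lt_succ_iff.2 hω]
  have hint_each : ∀ k ∈ Finset.range (D + 1),
      Integrable (fun ω => Set.indicator {ω | Z ω = k} (fun _ => exp (t * k)) ω) ℙ := by
    intro k _
    exact (integrable_const _).indicator (hmk k)
  have hint_f : Integrable f ℙ := by
    rw [hf]; exact integrable_finset_sum _ hint_each
  refine ⟨hint_f.congr heq.symm, ?_⟩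
  rw [mgf, integral_congr_ae heq, hf, integral_finset_sum _ hint_each]
  have hval : ∀ k ∈ Finset.range (D + 1),
      (∫ ω, Set.indicator {ω | Z ω = k} (fun _ => exp (t * k)) ω ∂ℙ)
        = (D.choose k : ℝ) * p ^ k * (1 - p) ^ (D - k) * exp (t * k) := by
    intro k _
    rw [integral_indicator_const _ (hmk k), measureReal_def, hbin k, smul_eq_mul]
  rw [Finset.sum_congr rfl hval, add_pow]
  refine Finset.sum_congr rfl fun k hk => ?_
  rw [mul_pow, ← Real.exp_nat_mul]
  push_cast
  ring_nf

/-- Lemma 3 (stash overflow bound). Fix integers `B ≥ 1`, `D ≥ 1` and reals `C > 0`, `S`,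
and set `t = CB/D − 1`. Assume `t > 0`, `S/B > 2C`, and
`exp t < 1 + (tC − ln 2)·B/D`. For each `j < B` let `X j` be the reflected walk
`X j 0 = 0`, `X j (i+1) = max(0, X j i + Z j i − C)`, where for each fixed `j` the
increments `Z j 0, …, Z j (B−1), …` are i.i.d. `Bin(1/B, D)` (processes for different
`j` may be arbitrarily correlated). Then
`Pr[∃ j < B, ∃ i ≤ B, X j i > S/B] ≤ B² · exp((CB/D − 1)·(2C − S/B))`. -/
theorem stash_overflow_bound {Ω : Type*} [MeasureSpace Ω]
    [IsProbabilityMeasure (ℙ : Measure Ω)]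
    (B D : ℕ) (hB : 1 ≤ B) (hD : 1 ≤ D) (C S : ℝ) (hC : 0 < C)
    (ht : 0 < C * B / D - 1)
    (hS : S / B > 2 * C)
    (hexp : Real.exp (C * B / D - 1) < 1 + ((C * B / D - 1) * C - Real.log 2) * B / D)
    (Z : ℕ → ℕ → Ω → ℕ) (hZm : ∀ j i, Measurable (Z j i))
    (hindep : ∀ j, iIndepFun (Z j) ℙ)
    (hbin : ∀ j i, ∀ k : ℕ, (ℙ {ω : Ω | Z j i ω = k}).toReal =
      (D.choose k : ℝ) * (1 / B) ^ k * (1 - 1 / B) ^ (D - k))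
    (X : ℕ → ℕ → Ω → ℝ) (hXm : ∀ j i, Measurable (X j i))
    (hX0 : ∀ j ω, X j 0 ω = 0)
    (hXrec : ∀ j i ω, X j (i + 1) ω = max 0 (X j i ω + Z j i ω - C)) :
    (ℙ {ω : Ω | ∃ j < B, ∃ i ≤ B, X j i ω > S / B}).toReal ≤
      (B : ℝ) ^ 2 * Real.exp ((C * B / D - 1) * (2 * C - S / B)) := by
  classical
  set t : ℝ := C * B / D - 1 with ht_def
  set p : ℝ := 1 / B with hp_def
  set s : ℝ := S / B with hs_def
  have hBpos : (0:ℝ) < B := by exact_mod_cast hB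
  have hDpos : (0:ℝ) < D := by exact_mod_cast hD
  have hp0 : 0 ≤ p := by positivity
  have hp1 : p ≤ 1 := by
    rw [hp_def, div_le_one hBpos]; exact_mod_cast hB
  have ht0 : 0 ≤ t := ht.le
  have hs0 : 0 < s := lt_trans (by positivity) hS
  -- real-valued increments
  set Zr : ℕ → ℕ → Ω → ℝ := fun j m => (fun n : ℕ => (n : ℝ)) ∘ Z j m with hZr_def
  have hZrm : ∀ j m, Measurable (Zr j m) := fun j m =>
    (measurable_of_countable _).comp (hZm j m)
  have hindepR : ∀ j, iIndepFun (Zr j) ℙ := fun j =>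
    (hindep j).comp _ (fun _ => measurable_of_countable _)
  -- per-increment mgf
  set ρ : ℝ := (p * exp t + (1 - p)) ^ D with hρ_def
  have hmgf : ∀ j m, Integrable (fun ω => exp (t * Zr j m ω)) ℙ ∧
      mgf (Zr j m) ℙ t = ρ := fun j m =>
    mgf_nat_pmf (Z j m) (hZm j m) D p t (hbin j m)
  have hbase0 : 0 ≤ p * exp t + (1 - p) :=
    add_nonneg (by positivity) (by linarith)
  have hρ0 : 0 ≤ ρ := pow_nonneg hbase0 D
  -- the key contraction bound
  have hρhalf : ρ * exp (-(t * C)) ≤ 1 / 2 := by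
    have h2 : ρ ≤ exp ((D : ℝ) * (p * (exp t - 1))) := by
      rw [hρ_def]
      calc (p * exp t + (1 - p)) ^ D ≤ exp (p * (exp t - 1)) ^ D := by
            apply pow_le_pow_left₀ hbase0
            have := Real.add_one_le_exp (p * (exp t - 1))
            linarith
        _ = exp ((D : ℝ) * (p * (exp t - 1))) := by rw [← Real.exp_nat_mul]
    have h3 : (D : ℝ) * (p * (exp t - 1)) - t * C ≤ -Real.log 2 := by
      have hBD : (0:ℝ) < (D:ℝ) / B := by positivity
      have h5 : exp t - 1 < (t * C - Real.log 2) * B / D := by linarith [hexp]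
      have h4 : (exp t - 1) * ((D:ℝ) / B) < t * C - Real.log 2 := by
        calc (exp t - 1) * ((D:ℝ) / B)
            < ((t * C - Real.log 2) * B / D) * ((D:ℝ) / B) :=
              mul_lt_mul_of_pos_right h5 hBD
          _ = t * C - Real.log 2 := by field_simp
      have h6 : (D : ℝ) * (p * (exp t - 1)) = (exp t - 1) * ((D:ℝ) / B) := by
        rw [hp_def]; ring
      rw [h6]
      linarith
    calc ρ * exp (-(t * C)) ≤ exp ((D:ℝ) * (p * (exp t - 1))) * exp (-(t * C)) :=
          mul_le_mul_of_nonneg_right h2 (exp_nonneg _)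
      _ = exp ((D:ℝ) * (p * (exp t - 1)) - t * C) := by rw [← exp_add]; ring_nf
      _ ≤ exp (-Real.log 2) := exp_le_exp.2 h3
      _ = 1 / 2 := by rw [exp_neg, exp_log two_pos]; norm_num
  -- the bad events
  set A : ℕ → ℕ → ℕ → Set Ω := fun j k i =>
    {ω | s + ((i - k : ℕ) : ℝ) * C ≤ (∑ m ∈ Finset.Ico k i, Zr j m) ω} with hA_def
  -- Chernoff bound on each bad event
  have hcher : ∀ j k i, k < i →
      (ℙ (A j k i)).toReal ≤ exp (-(t * s)) * (1 / 2) ^ (i - k) := by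
    intro j k i hki
    have hint : Integrable (fun ω => exp (t * (∑ m ∈ Finset.Ico k i, Zr j m) ω)) ℙ :=
      (hindepR j).integrable_exp_mul_sum (hZrm j) (fun m _ => (hmgf j m).1)
    have hch := measure_ge_le_exp_mul_mgf (μ := (ℙ : Measure Ω))
      (X := ∑ m ∈ Finset.Ico k i, Zr j m) (s + ((i - k : ℕ) : ℝ) * C) ht0 hint
    have hmgfsum : mgf (∑ m ∈ Finset.Ico k i, Zr j m) ℙ t = ρ ^ (i - k) := by
      rw [(hindepR j).mgf_sum (hZrm j) (Finset.Ico k i),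
        Finset.prod_congr rfl (fun m _ => (hmgf j m).2), Finset.prod_const, Nat.card_Ico]
    rw [hmgfsum] at hch
    refine le_trans (by simpa only [hA_def, measureReal_def] using hch) ?_
    have key : exp (-t * (s + ((i - k : ℕ) : ℝ) * C)) * ρ ^ (i - k)
        = exp (-(t * s)) * (ρ * exp (-(t * C))) ^ (i - k) := by
      have e1 : -t * (s + ((i - k : ℕ) : ℝ) * C)
          = -(t * s) + ((i - k : ℕ) : ℝ) * (-(t * C)) := by ring
      rw [e1, exp_add, Real.exp_nat_mul, mul_pow]; ring
    rw [key]
    refine mul_le_mul_of_nonneg_left ?_ (exp_nonneg _)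
    exact pow_le_pow_left₀ (by positivity) hρhalf _
  -- Lindley decomposition of the reflected walk
  have lind : ∀ j i ω, ∃ k ≤ i, X j i ω ≤ ∑ m ∈ Finset.Ico k i, ((Z j m ω : ℝ) - C) := by
    intro j i ω
    induction i with
    | zero => exact ⟨0, le_refl 0, by simp [hX0 j ω]⟩
    | succ n ih =>
      obtain ⟨k, hk, hle⟩ := ih
      rcases le_or_gt (X j n ω + (Z j n ω : ℝ) - C) 0 with h | h
      · exact ⟨n + 1, le_refl _, by rw [hXrec j n ω, max_eq_left h]; simp⟩
      · refine ⟨k, hk.trans (Nat.le_succ n), ?_⟩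
        rw [hXrec j n ω, max_eq_right h.le, Finset.sum_Ico_succ_top hk]
        linarith
  -- inclusion into the union of bad events
  have hsub : {ω : Ω | ∃ j < B, ∃ i ≤ B, X j i ω > s} ⊆
      ⋃ j ∈ Finset.range B, ⋃ i ∈ Finset.range (B + 1), ⋃ k ∈ Finset.range i, A j k i := by
    rintro ω ⟨j, hj, i, hi, hX⟩
    obtain ⟨k, hk, hle⟩ := lind j i ω
    have hlt : s < ∑ m ∈ Finset.Ico k i, ((Z j m ω : ℝ) - C) := lt_of_lt_of_le hX hle
    have hki : k < i := by
      rcases lt_or_eq_of_le hk with h | h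
      · exact h
      · exfalso; rw [h] at hlt; simp at hlt; linarith
    have h1 : (∑ m ∈ Finset.Ico k i, Zr j m) ω = ∑ m ∈ Finset.Ico k i, (Z j m ω : ℝ) := by
      rw [Finset.sum_apply]; rfl
    have h2 : ∑ m ∈ Finset.Ico k i, ((Z j m ω : ℝ) - C)
        = (∑ m ∈ Finset.Ico k i, (Z j m ω : ℝ)) - ((i - k : ℕ) : ℝ) * C := by
      rw [Finset.sum_sub_distrib, Finset.sum_const, Nat.card_Ico, nsmul_eq_mul]
    have hmem : ω ∈ A j k i := by
      simp only [hA_def, Set.mem_setOf_eq, h1]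
      linarith
    simp only [Set.mem_iUnion, Finset.mem_range]
    exact ⟨j, hj, i, Nat.lt_succ_of_le hi, k, hki, hmem⟩
  -- union bound, in ℝ≥0∞
  have hUB : ℙ {ω : Ω | ∃ j < B, ∃ i ≤ B, X j i ω > s}
      ≤ ∑ j ∈ Finset.range B, ∑ i ∈ Finset.range (B + 1), ∑ k ∈ Finset.range i,
          ℙ (A j k i) := by
    refine (measure_mono hsub).trans ?_
    refine (measure_biUnion_finset_le _ _).trans ?_
    refine Finset.sum_le_sum fun j _ => ?_
    refine (measure_biUnion_finset_le _ _).trans ?_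
    exact Finset.sum_le_sum fun i _ => measure_biUnion_finset_le _ _
  -- pass to real numbers
  have hT : (ℙ {ω : Ω | ∃ j < B, ∃ i ≤ B, X j i ω > s}).toReal
      ≤ ∑ j ∈ Finset.range B, ∑ i ∈ Finset.range (B + 1), ∑ k ∈ Finset.range i,
          (ℙ (A j k i)).toReal := by
    have hfin : (∑ j ∈ Finset.range B, ∑ i ∈ Finset.range (B + 1), ∑ k ∈ Finset.range i,
        ℙ (A j k i)) ≠ ⊤ := by
      refine ENNReal.sum_ne_top.2 fun j _ => ENNReal.sum_ne_top.2 fun i _ =>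
        ENNReal.sum_ne_top.2 fun k _ => measure_ne_top _ _
    refine (ENNReal.toReal_mono hfin hUB).trans_eq ?_
    rw [ENNReal.toReal_sum (fun j _ => ENNReal.sum_ne_top.2 fun i _ =>
      ENNReal.sum_ne_top.2 fun k _ => measure_ne_top _ _)]
    refine Finset.sum_congr rfl fun j _ => ?_
    rw [ENNReal.toReal_sum (fun i _ => ENNReal.sum_ne_top.2 fun k _ => measure_ne_top _ _)]
    exact Finset.sum_congr rfl fun i _ =>
      ENNReal.toReal_sum fun k _ => measure_ne_top _ _
  -- geometric series bound
  have hgeo : ∀ i : ℕ, (∑ k ∈ Finset.range i, ((1:ℝ) / 2) ^ (i - k)) ≤ 1 := by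
    intro i
    induction i with
    | zero => simp
    | succ n ih =>
      rw [Finset.sum_range_succ]
      have hh : ∀ k ∈ Finset.range n,
          ((1:ℝ) / 2) ^ (n + 1 - k) = (1 / 2) * (1 / 2) ^ (n - k) := by
        intro k hk
        rw [Finset.mem_range] at hk
        rw [← pow_succ']
        congr 1
        omega
      rw [Finset.sum_congr rfl hh, ← Finset.mul_sum]
      have hnn : n + 1 - n = 1 := by omega
      rw [hnn, pow_one]
      linarith
  -- per-bucket bound
  have hrow : ∀ j, (∑ i ∈ Finset.range (B + 1), ∑ k ∈ Finset.range i,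
      (ℙ (A j k i)).toReal) ≤ (B : ℝ) * exp (-(t * s)) := by
    intro j
    have hcell : ∀ i, (∑ k ∈ Finset.range i, (ℙ (A j k i)).toReal) ≤ exp (-(t * s)) := by
      intro i
      calc ∑ k ∈ Finset.range i, (ℙ (A j k i)).toReal
          ≤ ∑ k ∈ Finset.range i, exp (-(t * s)) * (1 / 2) ^ (i - k) :=
            Finset.sum_le_sum fun k hk => hcher j k i (Finset.mem_range.1 hk)
        _ = exp (-(t * s)) * ∑ k ∈ Finset.range i, ((1:ℝ) / 2) ^ (i - k) := by
            rw [Finset.mul_sum]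
        _ ≤ exp (-(t * s)) * 1 := mul_le_mul_of_nonneg_left (hgeo i) (exp_nonneg _)
        _ = exp (-(t * s)) := mul_one _
    rw [Finset.sum_range_succ']
    simp only [Finset.range_zero, Finset.sum_empty, add_zero]
    calc ∑ i ∈ Finset.range B, (∑ k ∈ Finset.range (i + 1), (ℙ (A j k (i + 1))).toReal)
        ≤ ∑ i ∈ Finset.range B, exp (-(t * s)) := Finset.sum_le_sum fun i _ => hcell (i + 1)
      _ = (B : ℝ) * exp (-(t * s)) := by
          rw [Finset.sum_const, Finset.card_range, nsmul_eq_mul]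
  calc (ℙ {ω : Ω | ∃ j < B, ∃ i ≤ B, X j i ω > s}).toReal
      ≤ ∑ j ∈ Finset.range B, ∑ i ∈ Finset.range (B + 1), ∑ k ∈ Finset.range i,
          (ℙ (A j k i)).toReal := hT
    _ ≤ ∑ j ∈ Finset.range B, (B : ℝ) * exp (-(t * s)) :=
        Finset.sum_le_sum fun j _ => hrow j
    _ = (B : ℝ) ^ 2 * exp (-(t * s)) := by
        rw [Finset.sum_const, Finset.card_range, nsmul_eq_mul]; ring
    _ ≤ (B : ℝ) ^ 2 * exp (t * (2 * C - s)) := by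
        refine mul_le_mul_of_nonneg_left (exp_le_exp.2 ?_) (by positivity)
        nlinarith
end
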